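/- Let F be a family of subsets of [n] with VC-dimension at most d. Then |F| ≤ ∑_{k=0}^{d} C(n,k). -/

import Mathlib

open Finset

def ShattersFam {n : ℕ} (F : Finset (Finset (Fin n))) (M : Finset (Fin n)) : Prop :=
  ∀ S ⊆ M, ∃ A ∈ F, A ∩ M = S

theorem sauer_shelah {n d : ℕ} (F : Finset (Finset (Fin n)))
    (hVC : ∀ M : Finset (Fin n), ShattersFam F M → M.card ≤ d) :
    F.card ≤ ∑ k ∈ Finset.range (d + 1), n.choose k := by
  have hd : F.vcDim ≤ d := by
    refine Finset.sup_le fun s hs ↦ hVC s fun S hS ↦ ?_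
    obtain ⟨u, hu, huS⟩ := (mem_shatterer.1 hs) hS
    exact ⟨u, hu, by rwa [inter_comm]⟩
  calc F.card ≤ F.shatterer.card := F.card_le_card_shatterer
    _ ≤ ∑ k ∈ Iic F.vcDim, (Fintype.card (Fin n)).choose k := card_shatterer_le_sum_vcDim
    _ ≤ ∑ k ∈ Iic d, n.choose k := by
        simp only [Fintype.card_fin]
        exact Finset.sum_le_sum_of_subset (Iic_subset_Iic.2 hd)
    _ = ∑ k ∈ Finset.range (d + 1), n.choose k := by
        apply Finset.sum_congr _ (fun _ _ => rfl); ext x; simp [Nat.lt_succ_iff]
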